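/- Let V be an irreducible highest weight U_q(g)-module with nondegenerate contravariant form, J⁺ ⊂ U_q(g_+) a graded left ideal, and V^{J⁺} = {v ∈ V : J⁺ v = 0}. Then with respect to the contravariant form on V, the orthogonal complement of V^{J⁺} is ω(J⁺)V, and the form induces a nondegenerate pairing between V^{J⁺} and V/ω(J⁺)V. -/

import Mathlib

/-- let `V` (= `M` below) be an irreducible highest weight module with
nondegenerate contravariant form `Φ` over a triangularly graded algebra `U` with
contravariant anti-involution `ω`, with finite-dimensional weight spaces, and let
`J⁺` be a graded left ideal.  Set `V^{J⁺} = {v : J⁺ v = 0}`.  Then the orthogonal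
complement of `V^{J⁺}` is `ω(J⁺)V`, and the form induces a nondegenerate pairing
between `V^{J⁺}` and `V/ω(J⁺)V`. -/
lemma auxDoublePerp {V : Type*} [AddCommGroup V] [Module ℂ V] [FiniteDimensional ℂ V]
    (B : V →ₗ[ℂ] V →ₗ[ℂ] ℂ) (h1 : ∀ a : V, (∀ b : V, B a b = 0) → a = 0)
    (P : Submodule ℂ V) (m : V)
    (hm : ∀ v : V, (∀ p ∈ P, B v p = 0) → B v m = 0) : m ∈ P := by
  have hinj : Function.Injective B := by
    rw [← LinearMap.ker_eq_bot, LinearMap.ker_eq_bot']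
    exact fun a ha => h1 a (fun b => by rw [ha]; rfl)
  have hsurj : Function.Surjective B :=
    (LinearMap.injective_iff_surjective_of_finrank_eq_finrank
      Subspace.dual_finrank_eq.symm).mp hinj
  rw [← Subspace.forall_mem_dualAnnihilator_apply_eq_zero_iff P m]
  intro φ hφ
  obtain ⟨v, rfl⟩ := hsurj φ
  exact hm v fun p hp => (Submodule.mem_dualAnnihilator _).mp hφ p hp

theorem kernel_orthocomplement_contravariant
    (Λ : Type) [AddCommGroup Λ] [DecidableEq Λ]
    (U : Type) [Ring U] [Algebra ℂ U]
    (M : Type) [AddCommGroup M] [Module ℂ M] [Module U M] [IsScalarTower ℂ U M]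
    (ω : U → U)
    (hωadd : ∀ x y : U, ω (x + y) = ω x + ω y)
    (hωmul : ∀ x y : U, ω (x * y) = ω y * ω x)
    (hωinv : ∀ x : U, ω (ω x) = x)
    (Φ : M →ₗ[ℂ] M →ₗ[ℂ] ℂ)
    (hcontra : ∀ (x : U) (a b : M), Φ (x • a) b = Φ a (ω x • b))
    (hnd1 : ∀ a : M, (∀ b : M, Φ a b = 0) → a = 0)
    (hnd2 : ∀ b : M, (∀ a : M, Φ a b = 0) → b = 0)
    (W : Λ → Submodule ℂ M) (hW : DirectSum.IsInternal W)
    (hfin : ∀ μ : Λ, FiniteDimensional ℂ (W μ))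
    (S : Λ → Submodule ℂ U)
    (hSsup : ⨆ γ : Λ, S γ = ⊤)
    (hSone : (1 : U) ∈ S 0)
    (hSmul : ∀ γ δ : Λ, ∀ x ∈ S γ, ∀ y ∈ S δ, x * y ∈ S (γ + δ))
    (hact : ∀ γ μ : Λ, ∀ x ∈ S γ, ∀ m ∈ W μ, x • m ∈ W (γ + μ))
    (hωgr : ∀ γ : Λ, ∀ x ∈ S γ, ω x ∈ S (-γ))
    (horth : ∀ μ ν : Λ, μ ≠ ν → ∀ a ∈ W μ, ∀ b ∈ W ν, Φ a b = 0)
    (J : Submodule ℂ U)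
    (hJleft : ∀ x : U, ∀ y ∈ J, x * y ∈ J)
    (hJgraded : J = ⨆ γ : Λ, (J ⊓ S γ)) :
    ({m : M | ∀ v : M, (∀ x ∈ J, x • v = 0) → Φ v m = 0}
        = (Submodule.span ℂ {m : M | ∃ x ∈ J, ∃ w : M, m = ω x • w} : Set M)) ∧
    (∀ v : M, (∀ x ∈ J, x • v = 0) →
      ∀ m ∈ Submodule.span ℂ {m : M | ∃ x ∈ J, ∃ w : M, m = ω x • w}, Φ v m = 0) ∧
    (∀ v : M, (∀ x ∈ J, x • v = 0) → v ≠ 0 → ∃ m : M, Φ v m ≠ 0) := by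
  classical
  letI dec : DirectSum.Decomposition W := hW.chooseDecomposition
  -- the projection onto the μ-component
  set π : Λ → M → M := fun μ m => ((DirectSum.decompose W m) μ : M) with hπdef
  have hπmem : ∀ μ m, π μ m ∈ W μ := fun μ m => SetLike.coe_mem _
  have hπzero : ∀ μ, π μ 0 = 0 := by
    intro μ; simp [hπdef, DirectSum.decompose_zero]
  have hπadd : ∀ μ a b, π μ (a + b) = π μ a + π μ b := by
    intro μ a b; simp [hπdef, DirectSum.decompose_add]
  have hπsmul : ∀ μ (c : ℂ) a, π μ (c • a) = c • π μ a := by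
    intro μ c a
    show ((DirectSum.decompose W (c • a)) μ : M) = c • ((DirectSum.decompose W a) μ : M)
    rw [← DirectSum.decomposeLinearEquiv_apply, map_smul,
      DirectSum.decomposeLinearEquiv_apply]
    rfl
  have hπsame : ∀ μ, ∀ m ∈ W μ, π μ m = m := by
    intro μ m hm; exact DirectSum.decompose_of_mem_same W hm
  have hπne : ∀ μ ν, μ ≠ ν → ∀ m ∈ W μ, π ν m = 0 := by
    intro μ ν hne m hm
    show ((DirectSum.decompose W m) ν : M) = 0
    rw [DirectSum.decompose_of_mem_ne W hm hne]
  -- scalars commute with the U-action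
  have hUC : ∀ (x : U) (c : ℂ) (w : M), x • (c • w) = c • (x • w) := by
    intro x c w
    have h1 : c • w = (c • (1 : U)) • w := by
      rw [smul_assoc, one_smul]
    rw [h1, ← mul_smul, mul_smul_comm, mul_one, smul_assoc]
  -- commuting the projections with homogeneous action
  have hcomm : ∀ γ : Λ, ∀ x ∈ S γ, ∀ μ : Λ, ∀ w : M,
      x • π μ w = π (γ + μ) (x • w) := by
    intro γ x hx μ w
    have hw : w ∈ ⨆ ν, W ν := by rw [hW.submodule_iSup_eq_top]; trivial
    refine Submodule.iSup_induction W (motive := fun w => x • π μ w = π (γ + μ) (x • w)) hw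
      (fun ν w hw => ?_) ?_ (fun a b ha hb => ?_)
    · show x • π μ w = π (γ + μ) (x • w)
      by_cases hνμ : ν = μ
      · subst hνμ
        rw [hπsame ν w hw, hπsame (γ + ν) (x • w) (hact γ ν x hx w hw)]
      · rw [hπne ν μ hνμ w hw, smul_zero,
          hπne (γ + ν) (γ + μ) (by simpa using hνμ) (x • w) (hact γ ν x hx w hw)]
    · show x • π μ (0 : M) = π (γ + μ) (x • (0 : M))
      rw [hπzero, smul_zero, hπzero]
    · show x • π μ (a + b) = π (γ + μ) (x • (a + b))
      rw [hπadd, smul_add, ha, hb, smul_add, hπadd]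
  -- orthogonality against components
  have hπorth : ∀ μ : Λ, ∀ a ∈ W μ, ∀ b : M, Φ a b = Φ a (π μ b) := by
    intro μ a ha b
    have hb : b ∈ ⨆ ν, W ν := by rw [hW.submodule_iSup_eq_top]; trivial
    refine Submodule.iSup_induction W (motive := fun b => Φ a b = Φ a (π μ b)) hb
      (fun ν b hbν => ?_) ?_ (fun p q hp hq => ?_)
    · show Φ a b = Φ a (π μ b)
      by_cases hνμ : ν = μ
      · subst hνμ; rw [hπsame ν b hbν]
      · rw [horth μ ν (fun h => hνμ h.symm) a ha b hbν, hπne ν μ hνμ b hbν, map_zero]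
    · show Φ a (0 : M) = Φ a (π μ (0 : M))
      rw [hπzero]
    · show Φ a (p + q) = Φ a (π μ (p + q))
      rw [map_add, hπadd, map_add, hp, hq]
  -- nondegeneracy on each weight space
  have hndμ : ∀ μ : Λ, ∀ a ∈ W μ, (∀ b ∈ W μ, Φ a b = 0) → a = 0 := by
    intro μ a ha h
    exact hnd1 a (fun b => by rw [hπorth μ a ha b]; exact h _ (hπmem μ b))
  -- induction over the graded ideal
  have hJind : ∀ (p : U → Prop), p 0 → (∀ x y, p x → p y → p (x + y)) →
      (∀ γ : Λ, ∀ x, x ∈ J → x ∈ S γ → p x) → ∀ x ∈ J, p x := by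
    intro p h0 hadd hhom x hx
    have hx' : x ∈ ⨆ γ : Λ, (J ⊓ S γ) := hJgraded ▸ hx
    exact Submodule.iSup_induction (fun γ => J ⊓ S γ) (motive := p) hx'
      (fun γ x hx => hhom γ x hx.1 hx.2) h0 hadd
  have hω0 : ω 0 = 0 := by
    have := hωadd 0 0
    rw [add_zero] at this
    exact left_eq_add.mp this
  -- conclusion 2 : V^{J} ⟂ ω(J)V
  have hc2 : ∀ v : M, (∀ x ∈ J, x • v = 0) →
      ∀ m ∈ Submodule.span ℂ {m : M | ∃ x ∈ J, ∃ w : M, m = ω x • w}, Φ v m = 0 := by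
    intro v hv m hm
    induction hm using Submodule.span_induction with
    | mem m hmem =>
        obtain ⟨x, hx, w, rfl⟩ := hmem
        rw [← hcontra x v w, hv x hx, map_zero]; rfl
    | zero => rw [map_zero]
    | add a b _ _ ha hb => rw [map_add, ha, hb, add_zero]
    | smul c a _ ha => rw [map_smul, ha, smul_zero]
  -- converse characterization of V^{J}
  have hKiff : ∀ v : M, (∀ m ∈ Submodule.span ℂ {m : M | ∃ x ∈ J, ∃ w : M, m = ω x • w},
      Φ v m = 0) → ∀ x ∈ J, x • v = 0 := by
    intro v h x hx
    exact hnd1 (x • v) (fun w => by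
      rw [hcontra x v w]
      exact h _ (Submodule.subset_span ⟨x, hx, w, rfl⟩))
  -- the span N is stable under the projections
  have hπgen : ∀ x ∈ J, ∀ (μ : Λ) (w : M),
      π μ (ω x • w) ∈ Submodule.span ℂ {m : M | ∃ x ∈ J, ∃ w : M, m = ω x • w} := by
    apply hJind (p := fun x => ∀ (μ : Λ) (w : M),
      π μ (ω x • w) ∈ Submodule.span ℂ {m : M | ∃ x ∈ J, ∃ w : M, m = ω x • w})
    · intro μ w; rw [hω0, zero_smul, hπzero]; exact Submodule.zero_mem _
    · intro x y hx hy μ w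
      rw [hωadd, add_smul, hπadd]
      exact Submodule.add_mem _ (hx μ w) (hy μ w)
    · intro γ x hxJ hxS μ w
      have h := hcomm (-γ) (ω x) (hωgr γ x hxS) (μ + γ) w
      rw [show -γ + (μ + γ) = μ by abel] at h
      rw [← h]
      exact Submodule.subset_span ⟨x, hxJ, π (μ + γ) w, rfl⟩
  have hπN : ∀ (μ : Λ), ∀ m ∈ Submodule.span ℂ {m : M | ∃ x ∈ J, ∃ w : M, m = ω x • w},
      π μ m ∈ Submodule.span ℂ {m : M | ∃ x ∈ J, ∃ w : M, m = ω x • w} := by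
    intro μ m hm
    induction hm using Submodule.span_induction with
    | mem m hmem =>
        obtain ⟨x, hx, w, rfl⟩ := hmem
        exact hπgen x hx μ w
    | zero => rw [hπzero]; exact Submodule.zero_mem _
    | add a b _ _ ha hb => rw [hπadd]; exact Submodule.add_mem _ ha hb
    | smul c a _ ha => rw [hπsmul]; exact Submodule.smul_mem _ c ha
  -- V^{J} is stable under the projections
  have hKπ : ∀ v : M, (∀ x ∈ J, x • v = 0) → ∀ μ : Λ, ∀ x ∈ J, x • π μ v = 0 := by
    intro v hv μ
    apply hJind (p := fun x => x • π μ v = 0)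
    · rw [zero_smul]
    · intro x y hx hy; rw [add_smul, hx, hy, add_zero]
    · intro γ x hxJ hxS
      rw [hcomm γ x hxS μ v, hv x hxJ, hπzero]
  -- the hard inclusion
  have hmain : ∀ m : M, (∀ v : M, (∀ x ∈ J, x • v = 0) → Φ v m = 0) →
      m ∈ Submodule.span ℂ {m : M | ∃ x ∈ J, ∃ w : M, m = ω x • w} := by
    intro m hm
    rw [← DirectSum.sum_support_decompose W m]
    apply Submodule.sum_mem
    intro μ _
    show π μ m ∈ _
    haveI := hfin μ
    set N := Submodule.span ℂ {m : M | ∃ x ∈ J, ∃ w : M, m = ω x • w} with hN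
    set P : Submodule ℂ (W μ) := N.comap (W μ).subtype with hP
    set B : (W μ) →ₗ[ℂ] (W μ) →ₗ[ℂ] ℂ := Φ.compl₁₂ (W μ).subtype (W μ).subtype with hB
    have hBapp : ∀ a b : W μ, B a b = Φ (a : M) (b : M) := fun a b => rfl
    have h1 : ∀ a : W μ, (∀ b : W μ, B a b = 0) → a = 0 := by
      intro a ha
      have : (a : M) = 0 := hndμ μ a a.2 (fun b hb => by
        have := ha ⟨b, hb⟩; rwa [hBapp] at this)
      exact Subtype.ext this
    have key : (⟨π μ m, hπmem μ m⟩ : W μ) ∈ P := by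
      apply auxDoublePerp B h1 P
      intro v hv
      rw [hBapp]
      -- v kills all of N
      have hvN : ∀ n ∈ N, Φ (v : M) n = 0 := by
        intro n hn
        rw [hπorth μ (v : M) v.2 n]
        exact hv ⟨π μ n, hπmem μ n⟩ (hπN μ n hn)
      have hvK : ∀ x ∈ J, x • (v : M) = 0 := hKiff (v : M) hvN
      rw [← hπorth μ (v : M) v.2 m]
      exact hm (v : M) hvK
    exact key
  refine ⟨?_, hc2, ?_⟩
  · ext m
    constructor
    · intro hm; exact hmain m hm
    · intro hm v hv; exact hc2 v hv m hm
  · intro v hv hne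
    by_contra h
    push_neg at h
    exact hne (hnd1 v h)
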